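/- For a prime p ≥ 5, the only normal subgroups of SL₂(𝔽_p) are the trivial group, the center {±I}, and SL₂(𝔽_p) itself; consequently PSL₂(𝔽_p) = SL₂(𝔽_p)/{±I} is a simple group. -/

import Mathlib

open Matrix Matrix.SpecialLinearGroup Subgroup

namespace SL2Simple

variable {p : ℕ} [Fact p.Prime]

abbrev SL2 (p : ℕ) := Matrix.SpecialLinearGroup (Fin 2) (ZMod p)

def U (t : ZMod p) : SL2 p := ⟨!![1, t; 0, 1], by simp [Matrix.det_fin_two_of]⟩
def Lo (t : ZMod p) : SL2 p := ⟨!![1, 0; t, 1], by simp [Matrix.det_fin_two_of]⟩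
def W : SL2 p := ⟨!![0, 1; -1, 0], by simp [Matrix.det_fin_two_of]⟩
def Dm (s t : ZMod p) (h : s * t = 1) : SL2 p := ⟨!![s, 0; 0, t], by simp [Matrix.det_fin_two_of, h]⟩

@[simp] lemma U_coe (t : ZMod p) : (U t : Matrix (Fin 2) (Fin 2) (ZMod p)) = !![1, t; 0, 1] := rfl
@[simp] lemma Lo_coe (t : ZMod p) : (Lo t : Matrix (Fin 2) (Fin 2) (ZMod p)) = !![1, 0; t, 1] := rfl
@[simp] lemma W_coe : ((W : SL2 p) : Matrix (Fin 2) (Fin 2) (ZMod p)) = !![0, 1; -1, 0] := rfl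
@[simp] lemma Dm_coe (s t : ZMod p) (h : s * t = 1) :
    (Dm s t h : Matrix (Fin 2) (Fin 2) (ZMod p)) = !![s, 0; 0, t] := rfl

lemma U_mul_U (x y : ZMod p) : U x * U y = U (x + y) := by
  apply Subtype.ext
  simp only [Matrix.SpecialLinearGroup.coe_mul]
  ext i j
  fin_cases i <;> fin_cases j <;> simp [U, Matrix.mul_apply, Fin.sum_univ_succ] <;> ring

@[simp] lemma U_zero : (U 0 : SL2 p) = 1 := by
  apply Subtype.ext; simp [U]; exact (Matrix.eta_fin_two 1).symm.trans (by norm_num [Matrix.one_apply])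

lemma U_inv (x : ZMod p) : (U x)⁻¹ = U (-x) := by
  apply inv_eq_of_mul_eq_one_right
  rw [U_mul_U]; simp

lemma Lo_inv (x : ZMod p) : (Lo x)⁻¹ = Lo (-x) := by
  apply inv_eq_of_mul_eq_one_right
  apply Subtype.ext
  simp only [Matrix.SpecialLinearGroup.coe_mul]
  ext i j
  fin_cases i <;> fin_cases j <;> simp [Lo, Matrix.mul_apply, Fin.sum_univ_succ, Matrix.one_apply]

lemma Dm_inv (s t : ZMod p) (h : s * t = 1) : (Dm s t h)⁻¹ = Dm t s (by rw [mul_comm]; exact h) := by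
  apply inv_eq_of_mul_eq_one_right
  apply Subtype.ext
  simp only [Matrix.SpecialLinearGroup.coe_mul]
  ext i j
  fin_cases i <;> fin_cases j <;>
    simp [Dm, Matrix.mul_apply, Fin.sum_univ_succ, Matrix.one_apply, h] <;>
    first | rfl | (rw [mul_comm]; exact h)

lemma W_inv : (W : SL2 p)⁻¹ = ⟨!![0, -1; 1, 0], by simp [Matrix.det_fin_two_of]⟩ := by
  apply inv_eq_of_mul_eq_one_right
  apply Subtype.ext
  change ((W : SL2 p) : Matrix (Fin 2) (Fin 2) (ZMod p)) * !![0, -1; 1, 0] = 1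
  ext i j
  fin_cases i <;> fin_cases j <;> simp [W, Matrix.mul_apply, Fin.sum_univ_succ, Matrix.one_apply]



variable {N : Subgroup (SL2 p)}

/-- Build an SL2 element from entries. -/
def M4 (a b c d : ZMod p) (h : a * d - b * c = 1) : SL2 p :=
  ⟨!![a, b; c, d], by rwa [Matrix.det_fin_two_of]⟩

@[simp] lemma M4_coe (a b c d : ZMod p) (h : a * d - b * c = 1) :
    (M4 a b c d h : Matrix (Fin 2) (Fin 2) (ZMod p)) = !![a, b; c, d] := rfl

lemma sl2_eta (g : SL2 p) : ∃ (a b c d : ZMod p) (h : a * d - b * c = 1), g = M4 a b c d h := by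
  have hdet : g.1 0 0 * g.1 1 1 - g.1 0 1 * g.1 1 0 = 1 := by
    rw [← Matrix.det_fin_two]; exact g.2
  exact ⟨_, _, _, _, hdet, Subtype.ext (Matrix.eta_fin_two g.1)⟩

lemma decomp (a b c d : ZMod p) (h : a * d - b * c = 1) (hc : c ≠ 0) :
    M4 a b c d h = U ((a - 1) * c⁻¹) * Lo c * U ((d - 1) * c⁻¹) := by
  apply Subtype.ext
  simp only [Matrix.SpecialLinearGroup.coe_mul, U_coe, Lo_coe, M4_coe]
  ext i j
  fin_cases i <;> fin_cases j <;>
    simp [Matrix.mul_apply, Fin.sum_univ_succ] <;> field_simp <;>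
    (first
      | linear_combination h
      | linear_combination (-1 : ZMod p) * h
      | linear_combination c * h
      | linear_combination (-c) * h
      | ring1)

lemma mem_of_lowerLeft (hU : ∀ t, U t ∈ N) (hL : ∀ t, Lo t ∈ N)
    (g : SL2 p) (hc : g.1 1 0 ≠ 0) : g ∈ N := by
  obtain ⟨a, b, c, d, h, rfl⟩ := sl2_eta g
  have hc' : c ≠ 0 := by simpa [M4] using hc
  rw [decomp a b c d h hc']
  exact N.mul_mem (N.mul_mem (hU _) (hL _)) (hU _)

lemma eq_top_of_U_mem (hU : ∀ t, U t ∈ N) (hL : ∀ t, Lo t ∈ N) : N = ⊤ := by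
  rw [Subgroup.eq_top_iff']
  intro g
  by_cases hc : g.1 1 0 ≠ 0
  · exact mem_of_lowerLeft hU hL g hc
  · push_neg at hc
    obtain ⟨a, b, c, d, h, rfl⟩ := sl2_eta g
    have hc0 : c = 0 := by simpa [M4] using hc
    subst hc0
    have hd : d ≠ 0 := by
      intro h0; rw [h0] at h; simp at h
    have hmem : M4 a b 0 d h * Lo 1 ∈ N := by
      apply mem_of_lowerLeft hU hL
      have : (M4 a b 0 d h * Lo 1).1 1 0 = d := by
        rw [Matrix.SpecialLinearGroup.coe_mul]
        simp [M4, Lo, Matrix.mul_apply, Fin.sum_univ_succ]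
      rw [this]; exact hd
    have : M4 a b 0 d h = (M4 a b 0 d h * Lo 1) * Lo (-1) := by
      rw [mul_assoc, ← Lo_inv]; simp
    rw [this]
    exact N.mul_mem hmem (hL _)

/- ## group-theoretic helpers -/

omit [Fact p.Prime] in
lemma conj_eq {A B X : SL2 p} (hEq : X * B = B * A) : X = B * A * B⁻¹ := by
  rw [← hEq]; group

omit [Fact p.Prime] in
lemma comm_eq {A B X : SL2 p} (hEq : X * B * A = A * B) : X = A * B * A⁻¹ * B⁻¹ := by
  have : A * B * A⁻¹ * B⁻¹ = X := by
    conv_lhs => rw [← hEq]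
    group
  exact this.symm

omit [Fact p.Prime] in
lemma comm_mem_left (hN : N.Normal) {A : SL2 p} (hA : A ∈ N) (B : SL2 p) :
    A * B * A⁻¹ * B⁻¹ ∈ N := by
  have := N.mul_mem hA (hN.conj_mem _ (N.inv_mem hA) B)
  rwa [← mul_assoc, ← mul_assoc] at this

omit [Fact p.Prime] in
lemma comm_mem_right (hN : N.Normal) {B : SL2 p} (hB : B ∈ N) (A : SL2 p) :
    A * B * A⁻¹ * B⁻¹ ∈ N :=
  N.mul_mem (hN.conj_mem _ hB A) (N.inv_mem hB)

/- ## numeric facts -/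

lemma nat_ne_zero (hp5 : 5 ≤ p) {n : ℕ} (hn : 0 < n) (hn5 : n < 5) : (n : ZMod p) ≠ 0 := by
  intro h
  rw [ZMod.natCast_eq_zero_iff] at h
  have := Nat.le_of_dvd hn h
  omega

lemma two_ne (hp5 : 5 ≤ p) : (2 : ZMod p) ≠ 0 := by
  have := nat_ne_zero (p := p) hp5 (n := 2) (by norm_num) (by norm_num); simpa using this

lemma three_ne (hp5 : 5 ≤ p) : (3 : ZMod p) ≠ 0 := by
  have := nat_ne_zero (p := p) hp5 (n := 3) (by norm_num) (by norm_num); simpa using this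

/- ## Step A1 -/

lemma stepA1 (hN : N.Normal) {a b c d : ZMod p} {h : a * d - b * c = 1}
    (hmem : M4 a b c d h ∈ N) (hc : c ≠ 0) :
    ∃ β : ZMod p, ∃ hβ : β * c = -1,
      M4 (a + d) β c 0 (by linear_combination -hβ) ∈ N := by
  obtain ⟨x, hx⟩ : ∃ x : ZMod p, x * c = d := ⟨d * c⁻¹, by field_simp⟩
  refine ⟨b - a * x, by linear_combination -h - a * hx, ?_⟩
  have hEq : M4 (a + d) (b - a * x) c 0 (by linear_combination h + a * hx) * U x
      = U x * M4 a b c d h := by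
    apply Subtype.ext
    simp only [Matrix.SpecialLinearGroup.coe_mul, U_coe, M4_coe]
    ext i j
    fin_cases i <;> fin_cases j <;>
      (try simp [Matrix.mul_apply, Fin.sum_univ_succ]) <;>
      (first
        | ring1
        | linear_combination hx
        | linear_combination -hx
        | linear_combination x * hx
        | linear_combination -(x * hx))
  rw [conj_eq hEq]
  exact hN.conj_mem _ hmem _

/- ## Step A2 : diagonal conjugation -/

lemma stepA2 (hN : N.Normal) {τ β c : ZMod p} {h : τ * 0 - β * c = 1}
    (hmem : M4 τ β c 0 h ∈ N) (hβ : β * c = -1) {s t : ZMod p} (hst : s * t = 1) :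
    M4 τ (s * s * β) (t * t * c) 0
      (by linear_combination (-(s * s * t * t)) * hβ + (s * t + 1) * hst) ∈ N := by
  have hEq : M4 τ (s * s * β) (t * t * c) 0
        (by linear_combination (-(s * s * t * t)) * hβ + (s * t + 1) * hst) * Dm s t hst
      = Dm s t hst * M4 τ β c 0 h := by
    apply Subtype.ext
    simp only [Matrix.SpecialLinearGroup.coe_mul, Dm_coe, M4_coe]
    ext i j
    fin_cases i <;> fin_cases j <;>
      (try simp [Matrix.mul_apply, Fin.sum_univ_succ]) <;>
      (first
        | ring1
        | linear_combination (s * β) * hst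
        | linear_combination -((s * β) * hst)
        | linear_combination (t * c) * hst
        | linear_combination -((t * c) * hst))
  rw [conj_eq hEq]
  exact hN.conj_mem _ hmem _

/- ## Step A3 : multiply by the inverse to get upper triangular -/

lemma stepA3 (hN : N.Normal) {τ β c : ZMod p} {h : τ * 0 - β * c = 1}
    (hmem : M4 τ β c 0 h ∈ N) (hβ : β * c = -1) {s t : ZMod p} (hst : s * t = 1) :
    M4 (s * s) (τ * β * (s * s - 1)) 0 (t * t)
      (by linear_combination (s * t + 1) * hst) ∈ N := by
  have hY := stepA2 hN hmem hβ hst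
  have hEq : M4 (s * s) (τ * β * (s * s - 1)) 0 (t * t)
        (by linear_combination (s * t + 1) * hst) * M4 τ β c 0 h
      = M4 τ (s * s * β) (t * t * c) 0
        (by linear_combination (-(s * s * t * t)) * hβ + (s * t + 1) * hst) := by
    apply Subtype.ext
    simp only [Matrix.SpecialLinearGroup.coe_mul, M4_coe]
    ext i j
    fin_cases i <;> fin_cases j <;>
      (try simp [Matrix.mul_apply, Fin.sum_univ_succ]) <;>
      (first
        | ring1
        | linear_combination (τ * (s * s - 1)) * hβ
        | linear_combination -((τ * (s * s - 1)) * hβ))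
  have hZ : M4 (s * s) (τ * β * (s * s - 1)) 0 (t * t)
        (by linear_combination (s * t + 1) * hst)
      = M4 τ (s * s * β) (t * t * c) 0
        (by linear_combination (-(s * s * t * t)) * hβ + (s * t + 1) * hst)
        * (M4 τ β c 0 h)⁻¹ := by
    rw [← hEq]; group
  rw [hZ]
  exact N.mul_mem hY (N.inv_mem hmem)

/- ## Step A4 : from upper triangular get a nontrivial U -/

lemma stepA4 (hp5 : 5 ≤ p) (hN : N.Normal) {L μ L' : ZMod p} {h : L * L' - μ * 0 = 1}
    (hmem : M4 L μ 0 L' h ∈ N) (hμ : μ ≠ 0) :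
    ∃ t ≠ 0, U t ∈ N := by
  have hLL' : L * L' = 1 := by linear_combination h
  by_cases hL2 : L * L = 1
  · refine ⟨μ * (L + L'), ?_, ?_⟩
    · refine mul_ne_zero hμ ?_
      intro h0
      exact two_ne hp5 (by linear_combination L * h0 - hL2 - hLL')
    · have key : M4 L μ 0 L' h * M4 L μ 0 L' h = U (μ * (L + L')) := by
        apply Subtype.ext
        simp only [Matrix.SpecialLinearGroup.coe_mul, M4_coe, U_coe]
        ext i j
        fin_cases i <;> fin_cases j <;>
          (try simp [Matrix.mul_apply, Fin.sum_univ_succ]) <;>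
          (first
            | ring1
            | linear_combination hL2
            | linear_combination -hL2
            | linear_combination (L * L' + 1) * hLL' - (L' * L') * hL2
            | linear_combination -((L * L' + 1) * hLL' - (L' * L') * hL2))
      rw [← key]
      exact N.mul_mem hmem hmem
  · refine ⟨L * L - 1, sub_ne_zero_of_ne hL2, ?_⟩
    have hEq : U (L * L - 1) * U 1 * M4 L μ 0 L' h = M4 L μ 0 L' h * U 1 := by
      apply Subtype.ext
      simp only [Matrix.SpecialLinearGroup.coe_mul, M4_coe, U_coe]
      ext i j
      fin_cases i <;> fin_cases j <;>
        (try simp [Matrix.mul_apply, Fin.sum_univ_succ]) <;>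
        (first
          | ring1
          | linear_combination L * hLL'
          | linear_combination -(L * hLL'))
    rw [comm_eq hEq]
    exact comm_mem_left hN hmem (U 1)

/- ## Step A: full traceful case -/

lemma stepA (hp5 : 5 ≤ p) (hN : N.Normal) {τ β c : ZMod p} {h : τ * 0 - β * c = 1}
    (hmem : M4 τ β c 0 h ∈ N) (hτ : τ ≠ 0) :
    ∃ t ≠ 0, U t ∈ N := by
  have hβ : β * c = -1 := by linear_combination -h
  have hβ0 : β ≠ 0 := by
    intro h0; rw [h0, zero_mul] at hβ; simp at hβ
  have h2 : (2 : ZMod p) ≠ 0 := two_ne hp5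
  have hst : (2 : ZMod p) * 2⁻¹ = 1 := mul_inv_cancel₀ h2
  have hZ := stepA3 hN hmem hβ hst
  refine stepA4 hp5 hN hZ ?_
  refine mul_ne_zero (mul_ne_zero hτ hβ0) ?_
  have : (2 : ZMod p) * 2 - 1 = 3 := by norm_num
  rw [this]
  exact three_ne hp5

/- ## Step B : trace zero fix -/

lemma stepB (hp5 : 5 ≤ p) (hN : N.Normal) {β c : ZMod p} {h : (0:ZMod p) * 0 - β * c = 1}
    (hmem : M4 0 β c 0 h ∈ N) :
    ∃ t ≠ 0, U t ∈ N := by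
  have hβ : β * c = -1 := by linear_combination -h
  have hβ0 : β ≠ 0 := by
    intro h0; rw [h0, zero_mul] at hβ; simp at hβ
  -- the commutator with Lo y
  have key : ∀ y : ZMod p,
      M4 1 (y * β * β) y (1 + y * y * β * β) (by ring) ∈ N := by
    intro y
    have hEq : M4 1 (y * β * β) y (1 + y * y * β * β) (by ring) * M4 0 β c 0 h * Lo y
        = Lo y * M4 0 β c 0 h := by
      apply Subtype.ext
      simp only [Matrix.SpecialLinearGroup.coe_mul, M4_coe, Lo_coe]
      ext i j
      fin_cases i <;> fin_cases j <;>
        (try simp [Matrix.mul_apply, Fin.sum_univ_succ]) <;>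
        (first
          | ring1
          | linear_combination (y * β) * hβ
          | linear_combination -((y * β) * hβ)
          | linear_combination (y * y * β) * hβ
          | linear_combination -((y * y * β) * hβ))
    rw [comm_eq hEq]
    exact comm_mem_right hN hmem (Lo y)
  -- choose y ∈ {1, 2} with nonzero trace
  by_cases hy1 : 1 + 1 * 1 * β * β + 1 ≠ 0
  · -- y = 1 works
    have hm := key 1
    obtain ⟨β', hβ', hm'⟩ := stepA1 hN hm one_ne_zero
    exact stepA hp5 hN hm' (by rw [add_comm] at hy1; simpa using hy1)
  · push_neg at hy1
    have hy2 : 1 + (1 + 2 * 2 * β * β) ≠ 0 := by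
      intro h0
      have h3 : (3 : ZMod p) * (β * β) = 0 := by linear_combination h0 - hy1
      rcases mul_eq_zero.mp h3 with h' | h'
      · exact three_ne hp5 h'
      · rcases mul_eq_zero.mp h' with h'' | h'' <;> exact hβ0 h''
    have hm := key 2
    obtain ⟨β', hβ', hm'⟩ := stepA1 hN hm (two_ne hp5)
    exact stepA hp5 hN hm' hy2

/- ## from any element with nonzero lower-left entry -/

lemma lemAB (hp5 : 5 ≤ p) (hN : N.Normal) {a b c d : ZMod p} {h : a * d - b * c = 1}
    (hmem : M4 a b c d h ∈ N) (hc : c ≠ 0) :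
    ∃ t ≠ 0, U t ∈ N := by
  obtain ⟨β, hβ, hm2⟩ := stepA1 hN hmem hc
  by_cases htr : a + d = 0
  · have hcast : M4 (a + d) β c 0 (by linear_combination -hβ)
        = M4 0 β c 0 (by linear_combination -hβ) := by
      apply Subtype.ext
      simp only [M4_coe]
      rw [htr]
    rw [hcast] at hm2
    exact stepB hp5 hN hm2
  · exact stepA hp5 hN hm2 htr

/- ## noncentral elements have a conjugate with nonzero lower-left entry -/

lemma one_coe_fin' : (1 : Matrix (Fin 2) (Fin 2) (ZMod p)) = !![1, 0; 0, 1] := by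
  ext i j
  fin_cases i <;> fin_cases j <;> simp [Matrix.one_apply]

lemma negone_coe_fin' : (-1 : Matrix (Fin 2) (Fin 2) (ZMod p)) = !![-1, 0; 0, -1] := by
  ext i j
  fin_cases i <;> fin_cases j <;> simp [Matrix.one_apply]

lemma lemC (hN : N.Normal) {g : SL2 p} (hg : g ∈ N)
    (h1 : (g : Matrix (Fin 2) (Fin 2) (ZMod p)) ≠ 1)
    (h2 : (g : Matrix (Fin 2) (Fin 2) (ZMod p)) ≠ -1) :
    ∃ (a b c d : ZMod p) (h : a * d - b * c = 1), M4 a b c d h ∈ N ∧ c ≠ 0 := by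
  obtain ⟨a, b, c, d, h, rfl⟩ := sl2_eta g
  by_cases hc : c ≠ 0
  · exact ⟨a, b, c, d, h, hg, hc⟩
  push_neg at hc
  subst hc
  by_cases hb : b ≠ 0
  · -- conjugate by W
    refine ⟨d, 0, -b, a, by linear_combination h, ?_, neg_ne_zero.mpr hb⟩
    have hEq : M4 d 0 (-b) a (by linear_combination h) * W = W * M4 a b 0 d h := by
      apply Subtype.ext
      simp only [Matrix.SpecialLinearGroup.coe_mul, M4_coe, W_coe]
      ext i j
      fin_cases i <;> fin_cases j <;>
        (try simp [Matrix.mul_apply, Fin.sum_univ_succ]) <;> ring1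
    rw [conj_eq hEq]
    exact hN.conj_mem _ hg _
  push_neg at hb
  subst hb
  -- diagonal, noncentral: a ≠ d
  have had : a ≠ d := by
    intro he
    subst he
    have ha2 : a * a = 1 := by linear_combination h
    rcases mul_self_eq_one_iff.mp ha2 with h' | h'
    · exact h1 (by subst h'; rw [one_coe_fin']; rfl)
    · exact h2 (by subst h'; rw [negone_coe_fin']; rfl)
  refine ⟨a, 0, a - d, d, by linear_combination h, ?_, sub_ne_zero_of_ne had⟩
  have hEq : M4 a 0 (a - d) d (by linear_combination h) * Lo 1 = Lo 1 * M4 a 0 0 d h := by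
    apply Subtype.ext
    simp only [Matrix.SpecialLinearGroup.coe_mul, M4_coe, Lo_coe]
    ext i j
    fin_cases i <;> fin_cases j <;>
      (try simp [Matrix.mul_apply, Fin.sum_univ_succ]) <;> ring1
  rw [conj_eq hEq]
  exact hN.conj_mem _ hg _

/- ## propagation of U -/

lemma U_prop (hN : N.Normal) {t₀ : ZMod p} (ht₀ : t₀ ≠ 0) (hU0 : U t₀ ∈ N) :
    ∀ t, U t ∈ N := by
  have hsq : ∀ s : ZMod p, U (s * s * t₀) ∈ N := by
    intro s
    by_cases hs : s = 0
    · subst hs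
      have : (0 : ZMod p) * 0 * t₀ = 0 := by ring
      rw [this, U_zero]
      exact N.one_mem
    · have hst : s * s⁻¹ = 1 := mul_inv_cancel₀ hs
      have hEq : U (s * s * t₀) * Dm s s⁻¹ hst = Dm s s⁻¹ hst * U t₀ := by
        apply Subtype.ext
        simp only [Matrix.SpecialLinearGroup.coe_mul, U_coe, Dm_coe]
        ext i j
        fin_cases i <;> fin_cases j <;>
          (try simp [Matrix.mul_apply, Fin.sum_univ_succ]) <;>
          (first
            | ring1
            | linear_combination (s * t₀) * hst
            | linear_combination -((s * t₀) * hst))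
      rw [conj_eq hEq]
      exact hN.conj_mem _ hU0 _
  intro t
  obtain ⟨u, v, huv⟩ := ZMod.sq_add_sq p (t * t₀⁻¹)
  have hsum : u * u * t₀ + v * v * t₀ = t := by
    field_simp at huv
    linear_combination huv
  have := N.mul_mem (hsq u) (hsq v)
  rwa [U_mul_U, hsum] at this

lemma Lo_of_U (hN : N.Normal) (hU : ∀ t, U t ∈ N) : ∀ t, Lo t ∈ N := by
  intro t
  have hEq : Lo t * W = W * U (-t) := by
    apply Subtype.ext
    simp only [Matrix.SpecialLinearGroup.coe_mul, U_coe, W_coe, Lo_coe]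
    ext i j
    fin_cases i <;> fin_cases j <;>
      (try simp [Matrix.mul_apply, Fin.sum_univ_succ]) <;> ring1
  rw [conj_eq hEq]
  exact hN.conj_mem _ (hU _) _

/- ## main: a normal subgroup with a noncentral element is everything -/

lemma eq_top_of_noncentral (hp5 : 5 ≤ p) (hN : N.Normal) {g : SL2 p} (hg : g ∈ N)
    (h1 : (g : Matrix (Fin 2) (Fin 2) (ZMod p)) ≠ 1)
    (h2 : (g : Matrix (Fin 2) (Fin 2) (ZMod p)) ≠ -1) :
    N = ⊤ := by
  obtain ⟨a, b, c, d, h, hmem, hc⟩ := lemC hN hg h1 h2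
  obtain ⟨t₀, ht₀, hU0⟩ := lemAB hp5 hN hmem hc
  have hU := U_prop hN ht₀ hU0
  exact eq_top_of_U_mem hU (Lo_of_U hN hU)

/- ## the center -/

lemma center_coe_eq :
    ((center (SL2 p) : Subgroup (SL2 p)) : Set (SL2 p)) =
      {g : SL2 p | (g : Matrix (Fin 2) (Fin 2) (ZMod p)) = 1 ∨
        (g : Matrix (Fin 2) (Fin 2) (ZMod p)) = -1} := by
  ext g
  simp only [SetLike.mem_coe, Set.mem_setOf_eq]
  rw [Matrix.SpecialLinearGroup.mem_center_iff]
  constructor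
  · rintro ⟨r, hr, hscalar⟩
    rw [Fintype.card_fin] at hr
    have hr2 : r * r = 1 := by rw [← pow_two]; exact hr
    rcases mul_self_eq_one_iff.mp hr2 with h' | h'
    · left; rw [← hscalar, h', _root_.map_one]
    · right; rw [← hscalar, h', map_neg, _root_.map_one]
  · rintro (h' | h')
    · exact ⟨1, by rw [one_pow], by rw [_root_.map_one, h']⟩
    · exact ⟨-1, by rw [Fintype.card_fin]; norm_num, by rw [map_neg, _root_.map_one, h']⟩

def negOne : SL2 p := M4 (-1) 0 0 (-1) (by ring)

lemma negOne_coe : ((negOne : SL2 p) : Matrix (Fin 2) (Fin 2) (ZMod p)) = -1 := by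
  rw [negone_coe_fin']; rfl

lemma negOne_mem_center : (negOne : SL2 p) ∈ center (SL2 p) := by
  have := (Set.ext_iff.mp (center_coe_eq (p := p)) negOne).mpr
  exact this (Or.inr negOne_coe)

lemma negOne_ne_one (hp5 : 5 ≤ p) : (negOne : SL2 p) ≠ 1 := by
  intro h
  have h0 : ((negOne : SL2 p) : Matrix (Fin 2) (Fin 2) (ZMod p)) 0 0 =
      ((1 : SL2 p) : Matrix (Fin 2) (Fin 2) (ZMod p)) 0 0 := by rw [h]
  rw [negOne_coe, one_coe_fin'] at h0
  simp [Matrix.one_apply] at h0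
  exact two_ne hp5 (by linear_combination -h0)

/- ## classification of normal subgroups -/

lemma classification (hp5 : 5 ≤ p) (hN : N.Normal) :
    N = ⊥ ∨ N = center (SL2 p) ∨ N = ⊤ := by
  by_cases hle : N ≤ center (SL2 p)
  · by_cases hneg : (negOne : SL2 p) ∈ N
    · right; left
      apply le_antisymm hle
      intro x hx
      have := (Set.ext_iff.mp (center_coe_eq (p := p)) x).mp hx
      rcases this with h' | h'
      · have : x = 1 := Subtype.ext h'
        rw [this]; exact N.one_mem
      · have : x = negOne := Subtype.ext (by rw [h', negOne_coe])
        rw [this]; exact hneg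
    · left
      rw [eq_bot_iff]
      intro x hx
      have hxc := hle hx
      have := (Set.ext_iff.mp (center_coe_eq (p := p)) x).mp hxc
      rcases this with h' | h'
      · rw [mem_bot]; exact Subtype.ext h'
      · exfalso
        have : x = negOne := Subtype.ext (by rw [h', negOne_coe])
        rw [this] at hx
        exact hneg hx
  · right; right
    obtain ⟨g, hg, hgc⟩ := SetLike.not_le_iff_exists.mp hle
    have := Set.ext_iff.mp (center_coe_eq (p := p)) g
    have hnot : ¬((g : Matrix (Fin 2) (Fin 2) (ZMod p)) = 1 ∨
        (g : Matrix (Fin 2) (Fin 2) (ZMod p)) = -1) := fun hc => hgc (this.mpr hc)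
    push_neg at hnot
    exact eq_top_of_noncentral hp5 hN hg hnot.1 hnot.2


/- ## simplicity of the quotient -/

lemma U_one_not_central : (U 1 : SL2 p) ∉ center (SL2 p) := by
  intro hmem
  have := (Set.ext_iff.mp (center_coe_eq (p := p)) (U 1)).mp hmem
  rcases this with h' | h'
  · have h0 : ((U 1 : SL2 p) : Matrix (Fin 2) (Fin 2) (ZMod p)) 0 1 =
        (1 : Matrix (Fin 2) (Fin 2) (ZMod p)) 0 1 := by rw [h']
    rw [U_coe, one_coe_fin'] at h0
    simp at h0
  · have h0 : ((U 1 : SL2 p) : Matrix (Fin 2) (Fin 2) (ZMod p)) 0 1 =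
        (-1 : Matrix (Fin 2) (Fin 2) (ZMod p)) 0 1 := by rw [h']
    rw [U_coe, negone_coe_fin'] at h0
    simp at h0

lemma quotient_simple (hp5 : 5 ≤ p) :
    IsSimpleGroup (SL2 p ⧸ center (SL2 p)) := by
  have hnt : Nontrivial (SL2 p ⧸ center (SL2 p)) := by
    refine ⟨⟨QuotientGroup.mk (U 1), 1, ?_⟩⟩
    rw [Ne, QuotientGroup.eq_one_iff]
    exact U_one_not_central
  refine @IsSimpleGroup.mk _ _ hnt (fun H hH => ?_)
  have hsur := QuotientGroup.mk'_surjective (center (SL2 p))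
  set M := Subgroup.comap (QuotientGroup.mk' (center (SL2 p))) H with hMdef
  have hM : M.Normal := hH.comap _
  have hZM : center (SL2 p) ≤ M := by
    intro z hz
    have h1 : (QuotientGroup.mk' (center (SL2 p))) z = 1 :=
      (QuotientGroup.eq_one_iff z).mpr hz
    exact Subgroup.mem_comap.mpr (h1 ▸ H.one_mem)
  have hmap : Subgroup.map (QuotientGroup.mk' (center (SL2 p))) M = H :=
    Subgroup.map_comap_eq_self_of_surjective hsur H
  rcases classification hp5 hM with hbot | hcen | htop
  · exfalso
    have hmem : (negOne : SL2 p) ∈ M := hZM negOne_mem_center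
    rw [hbot] at hmem
    exact negOne_ne_one hp5 (Subgroup.mem_bot.mp hmem)
  · left
    rw [← hmap, hcen, eq_bot_iff]
    intro x hx
    obtain ⟨z, hz, rfl⟩ := hx
    rw [Subgroup.mem_bot]
    exact (QuotientGroup.eq_one_iff z).mpr hz
  · right
    rw [← hmap, htop]
    exact Subgroup.map_top_of_surjective _ hsur

end SL2Simple

theorem stmt_17 {p : ℕ} (hp : p.Prime) (hp5 : 5 ≤ p) :
    ((Subgroup.center (Matrix.SpecialLinearGroup (Fin 2) (ZMod p)) : Set _) =
      {g : Matrix.SpecialLinearGroup (Fin 2) (ZMod p) |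
        (g : Matrix (Fin 2) (Fin 2) (ZMod p)) = 1 ∨
        (g : Matrix (Fin 2) (Fin 2) (ZMod p)) = -1}) ∧
    (∀ N : Subgroup (Matrix.SpecialLinearGroup (Fin 2) (ZMod p)), N.Normal →
      N = ⊥ ∨ N = Subgroup.center (Matrix.SpecialLinearGroup (Fin 2) (ZMod p)) ∨ N = ⊤) ∧
    IsSimpleGroup (Matrix.SpecialLinearGroup (Fin 2) (ZMod p) ⧸
      Subgroup.center (Matrix.SpecialLinearGroup (Fin 2) (ZMod p))) := by
  haveI : Fact p.Prime := ⟨hp⟩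
  exact ⟨SL2Simple.center_coe_eq, fun N hN => SL2Simple.classification hp5 hN,
    SL2Simple.quotient_simple hp5⟩
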